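/- Let N ≥ 2, let Q be a generator matrix on Fin N, let k⋆ : Fin N, and let q⋆ > 0 and q̄ > 0 satisfy Q i k⋆ ≥ q⋆ for every i ≠ k⋆ and ∑_{j ≠ i} Q i j ≤ q̄ for every i. Set α⋆ := exp(−q̄/q⋆) and γ⋆ := q⋆ * Real.log (1/(1 − α⋆)). Then α⋆ < 1, and for every ξ in the zero-sum subspace Z and every t ≥ 0, ‖exp(t • Qᵀ) *ᵥ ξ‖₁ ≤ (1 − α⋆)⁻¹ * exp(−γ⋆ * t) * ‖ξ‖₁. -/

import Mathlib

open Matrix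

/-- The ℓ¹ norm on `Fin N → ℝ`. -/
def l1norm {N : ℕ} (x : Fin N → ℝ) : ℝ := ∑ i, |x i|

/-- A generator (transition-rate) matrix: nonnegative off-diagonal entries and zero row sums. -/
def IsGenerator {N : ℕ} (Q : Matrix (Fin N) (Fin N) ℝ) : Prop :=
  (∀ i j, i ≠ j → 0 ≤ Q i j) ∧ (∀ i, ∑ j, Q i j = 0)

namespace MixAux

open NormedSpace

attribute [local instance] Matrix.linftyOpNormedRing Matrix.linftyOpNormedAlgebra

variable {N : ℕ}

/-- The linear map `M ↦ (M *ᵥ v) i`. -/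
noncomputable def mulVecEntryLM (v : Fin N → ℝ) (i : Fin N) :
    Matrix (Fin N) (Fin N) ℝ →ₗ[ℝ] ℝ where
  toFun M := (M *ᵥ v) i
  map_add' A B := by simp [Matrix.add_mulVec]
  map_smul' c A := by simp [Matrix.smul_mulVec]

lemma exp_mulVec_eq (A : Matrix (Fin N) (Fin N) ℝ) (v : Fin N → ℝ) (i : Fin N) :
    (exp A *ᵥ v) i = ∑' n : ℕ, ((n.factorial : ℝ)⁻¹ * ((A ^ n) *ᵥ v) i) := by
  have hs : Summable (fun n : ℕ => ((n.factorial : ℝ)⁻¹) • A ^ n) := expSeries_summable' A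
  set L := (mulVecEntryLM v i).toContinuousLinearMap with hLdef
  have hmap := L.map_tsum hs
  have hL : ∀ M : Matrix (Fin N) (Fin N) ℝ, L M = (M *ᵥ v) i := fun _ => rfl
  rw [exp_eq_tsum ℝ]
  calc ((∑' n : ℕ, ((n.factorial : ℝ)⁻¹) • A ^ n) *ᵥ v) i
      = L (∑' n : ℕ, ((n.factorial : ℝ)⁻¹) • A ^ n) := (hL _).symm
    _ = ∑' n : ℕ, L (((n.factorial : ℝ)⁻¹) • A ^ n) := hmap
    _ = ∑' n : ℕ, ((n.factorial : ℝ)⁻¹ * ((A ^ n) *ᵥ v) i) := by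
        refine tsum_congr fun n => ?_
        rw [L.map_smul, hL]; simp

lemma summable_mulVec (A : Matrix (Fin N) (Fin N) ℝ) (v : Fin N → ℝ) (i : Fin N) :
    Summable (fun n : ℕ => (n.factorial : ℝ)⁻¹ * ((A ^ n) *ᵥ v) i) := by
  have hs : Summable (fun n : ℕ => ((n.factorial : ℝ)⁻¹) • A ^ n) := expSeries_summable' A
  set L := (mulVecEntryLM v i).toContinuousLinearMap with hLdef
  have := hs.map L.toLinearMap.toAddMonoidHom L.continuous
  refine this.congr fun n => ?_
  show L (((n.factorial : ℝ)⁻¹) • A ^ n) = _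
  rw [L.map_smul]
  show (n.factorial : ℝ)⁻¹ • ((A ^ n) *ᵥ v) i = _
  simp

lemma mulVec_single_entry (M : Matrix (Fin N) (Fin N) ℝ) (i j : Fin N) :
    (M *ᵥ Pi.single j 1) i = M i j := by
  simp [Matrix.mulVec, dotProduct, Pi.single_apply]

lemma exp_entry_eq (A : Matrix (Fin N) (Fin N) ℝ) (i j : Fin N) :
    exp A i j = ∑' n : ℕ, ((n.factorial : ℝ)⁻¹ * (A ^ n) i j) := by
  have h := exp_mulVec_eq A (Pi.single j 1) i
  rw [mulVec_single_entry] at h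
  rw [h]
  exact tsum_congr fun n => by rw [mulVec_single_entry]

lemma summable_entry (A : Matrix (Fin N) (Fin N) ℝ) (i j : Fin N) :
    Summable (fun n : ℕ => (n.factorial : ℝ)⁻¹ * (A ^ n) i j) := by
  have h := summable_mulVec A (Pi.single j 1) i
  refine h.congr fun n => by rw [mulVec_single_entry]

lemma pow_entry_nonneg {B : Matrix (Fin N) (Fin N) ℝ} (hB : ∀ i j, 0 ≤ B i j) :
    ∀ n i j, 0 ≤ (B ^ n) i j := by
  intro n
  induction n with
  | zero => intro i j; simp only [pow_zero, Matrix.one_apply]; split <;> norm_num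
  | succ n ih =>
      intro i j
      rw [pow_succ, Matrix.mul_apply]
      exact Finset.sum_nonneg fun l _ => mul_nonneg (ih i l) (hB l j)

lemma exp_entry_nonneg {B : Matrix (Fin N) (Fin N) ℝ} (hB : ∀ i j, 0 ≤ B i j) (i j : Fin N) :
    0 ≤ exp B i j := by
  rw [exp_entry_eq]
  exact tsum_nonneg fun n => mul_nonneg (by positivity) (pow_entry_nonneg hB n i j)

lemma exp_entry_lower {B : Matrix (Fin N) (Fin N) ℝ} (hB : ∀ i j, 0 ≤ B i j) (i j : Fin N) :
    (1 : Matrix (Fin N) (Fin N) ℝ) i j + B i j ≤ exp B i j := by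
  rw [exp_entry_eq]
  have h2 : ∑ n ∈ Finset.range 2, ((n.factorial : ℝ)⁻¹ * (B ^ n) i j)
      = (1 : Matrix (Fin N) (Fin N) ℝ) i j + B i j := by
    simp [Finset.sum_range_succ]
  rw [← h2]
  exact Summable.sum_le_tsum (Finset.range 2)
    (fun n _ => mul_nonneg (by positivity) (pow_entry_nonneg hB n i j))
    (summable_entry B i j)

lemma exp_smul_one (c : ℝ) :
    exp (c • (1 : Matrix (Fin N) (Fin N) ℝ)) = Real.exp c • (1 : Matrix (Fin N) (Fin N) ℝ) := by
  have h1 : c • (1 : Matrix (Fin N) (Fin N) ℝ) = algebraMap ℝ _ c :=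
    (Algebra.algebraMap_eq_smul_one c).symm
  have h2 : Real.exp c • (1 : Matrix (Fin N) (Fin N) ℝ) = algebraMap ℝ _ (Real.exp c) :=
    (Algebra.algebraMap_eq_smul_one _).symm
  rw [h1, h2, Real.exp_eq_exp_ℝ, algebraMap_exp_comm]
  rfl

lemma exp_add_smul_one (B : Matrix (Fin N) (Fin N) ℝ) (c : ℝ) :
    exp (B + c • (1 : Matrix (Fin N) (Fin N) ℝ)) = Real.exp c • exp B := by
  rw [Matrix.exp_add_of_commute B (c • 1) ((Commute.one_right B).smul_right c),
    exp_smul_one, mul_smul_comm, mul_one]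

lemma exp_mulVec_one {A : Matrix (Fin N) (Fin N) ℝ} (hA : A *ᵥ (fun _ => 1) = 0) (i : Fin N) :
    (exp A *ᵥ (fun _ => 1)) i = 1 := by
  rw [exp_mulVec_eq]
  have h0 : ∀ n : ℕ, n ≠ 0 → (n.factorial : ℝ)⁻¹ * ((A ^ n) *ᵥ (fun _ => 1)) i = 0 := by
    intro n hn
    obtain ⟨m, rfl⟩ := Nat.exists_eq_succ_of_ne_zero hn
    rw [pow_succ, ← Matrix.mulVec_mulVec, hA]
    simp
  rw [tsum_eq_single 0 h0]
  simp [Matrix.mulVec, dotProduct, Matrix.one_apply]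

/-- Doeblin contraction step. -/
lemma doeblin_step (P : Matrix (Fin N) (Fin N) ℝ) (α : ℝ) (hα : 0 ≤ α) (k : Fin N)
    (hnn : ∀ i j, 0 ≤ P i j) (hrow : ∀ i, ∑ j, P i j = 1) (hminP : ∀ i, α ≤ P i k)
    (ξ : Fin N → ℝ) (hξ : ∑ i, ξ i = 0) :
    l1norm (Pᵀ *ᵥ ξ) ≤ (1 - α) * l1norm ξ := by
  set M : Matrix (Fin N) (Fin N) ℝ := Matrix.of fun i j => P i j - if j = k then α else 0 with hM
  have hMnn : ∀ i j, 0 ≤ M i j := by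
    intro i j
    by_cases h : j = k
    · subst h; simpa [hM, sub_nonneg] using hminP i
    · simpa [hM, h] using hnn i j
  have hMrow : ∀ i, ∑ j, M i j = 1 - α := by
    intro i
    simp only [hM, Matrix.of_apply]
    rw [Finset.sum_sub_distrib, hrow i, Finset.sum_ite_eq' Finset.univ k (fun _ => α)]
    simp
  have happ : ∀ j, (Pᵀ *ᵥ ξ) j = ∑ i, M i j * ξ i := by
    intro j
    have h1 : (Pᵀ *ᵥ ξ) j = ∑ i, P i j * ξ i := by
      simp [Matrix.mulVec, dotProduct, Matrix.transpose_apply]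
    have h2 : ∑ i, M i j * ξ i
        = ∑ i, P i j * ξ i - (if j = k then α else 0) * ∑ i, ξ i := by
      rw [Finset.mul_sum, ← Finset.sum_sub_distrib]
      exact Finset.sum_congr rfl fun i _ => by simp [hM, sub_mul]
    rw [h1, h2, hξ, mul_zero, sub_zero]
  calc l1norm (Pᵀ *ᵥ ξ) = ∑ j, |∑ i, M i j * ξ i| := by
        unfold l1norm; exact Finset.sum_congr rfl fun j _ => by rw [happ j]
    _ ≤ ∑ j, ∑ i, M i j * |ξ i| := by
        refine Finset.sum_le_sum fun j _ => ?_
        calc |∑ i, M i j * ξ i| ≤ ∑ i, |M i j * ξ i| := Finset.abs_sum_le_sum_abs _ _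
          _ = ∑ i, M i j * |ξ i| := Finset.sum_congr rfl fun i _ => by
              rw [abs_mul, abs_of_nonneg (hMnn i j)]
    _ = ∑ i, (∑ j, M i j) * |ξ i| := by
        rw [Finset.sum_comm]
        exact Finset.sum_congr rfl fun i _ => by rw [Finset.sum_mul]
    _ = (1 - α) * l1norm ξ := by
        unfold l1norm
        rw [Finset.mul_sum]
        exact Finset.sum_congr rfl fun i _ => by rw [hMrow i]

/-- Plain contraction. -/
lemma contraction_step (P : Matrix (Fin N) (Fin N) ℝ)
    (hnn : ∀ i j, 0 ≤ P i j) (hrow : ∀ i, ∑ j, P i j = 1) (ξ : Fin N → ℝ) :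
    l1norm (Pᵀ *ᵥ ξ) ≤ l1norm ξ := by
  have happ : ∀ j, (Pᵀ *ᵥ ξ) j = ∑ i, P i j * ξ i := by
    intro j; simp [Matrix.mulVec, dotProduct, Matrix.transpose_apply]
  calc l1norm (Pᵀ *ᵥ ξ) = ∑ j, |∑ i, P i j * ξ i| := by
        unfold l1norm; exact Finset.sum_congr rfl fun j _ => by rw [happ j]
    _ ≤ ∑ j, ∑ i, P i j * |ξ i| := by
        refine Finset.sum_le_sum fun j _ => ?_
        calc |∑ i, P i j * ξ i| ≤ ∑ i, |P i j * ξ i| := Finset.abs_sum_le_sum_abs _ _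
          _ = ∑ i, P i j * |ξ i| := Finset.sum_congr rfl fun i _ => by
              rw [abs_mul, abs_of_nonneg (hnn i j)]
    _ = ∑ i, (∑ j, P i j) * |ξ i| := by
        rw [Finset.sum_comm]
        exact Finset.sum_congr rfl fun i _ => by rw [Finset.sum_mul]
    _ = l1norm ξ := by
        unfold l1norm
        exact Finset.sum_congr rfl fun i _ => by rw [hrow i, one_mul]

lemma sum_transpose_mulVec (P : Matrix (Fin N) (Fin N) ℝ) (hrow : ∀ i, ∑ j, P i j = 1)
    (ξ : Fin N → ℝ) : ∑ j, (Pᵀ *ᵥ ξ) j = ∑ i, ξ i := by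
  have happ : ∀ j, (Pᵀ *ᵥ ξ) j = ∑ i, P i j * ξ i := by
    intro j; simp [Matrix.mulVec, dotProduct, Matrix.transpose_apply]
  calc ∑ j, (Pᵀ *ᵥ ξ) j = ∑ j, ∑ i, P i j * ξ i :=
        Finset.sum_congr rfl fun j _ => happ j
    _ = ∑ i, ∑ j, P i j * ξ i := Finset.sum_comm 
    _ = ∑ i, ξ i := Finset.sum_congr rfl fun i _ => by
        rw [← Finset.sum_mul, hrow i, one_mul]

end MixAux

theorem minorization_implies_mixing {N : ℕ} (hN : 2 ≤ N)
    (Q : Matrix (Fin N) (Fin N) ℝ) (hQ : IsGenerator Q)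
    (kstar : Fin N) (qstar qbar : ℝ) (hqstar : 0 < qstar) (hqbar : 0 < qbar)
    (hmin : ∀ i, i ≠ kstar → qstar ≤ Q i kstar)
    (hrate : ∀ i, ∑ j ∈ Finset.univ.erase i, Q i j ≤ qbar) :
    Real.exp (-qbar / qstar) < 1 ∧
    ∀ ξ : Fin N → ℝ, (∑ i, ξ i) = 0 → ∀ t : ℝ, 0 ≤ t →
      l1norm (NormedSpace.exp (t • Qᵀ) *ᵥ ξ) ≤
        (1 - Real.exp (-qbar / qstar))⁻¹ *
          Real.exp (-(qstar * Real.log (1 / (1 - Real.exp (-qbar / qstar)))) * t) *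
          l1norm ξ := by
  classical
  set α := Real.exp (-qbar / qstar) with hαdef
  have hα0 : 0 < α := Real.exp_pos _
  have hα1 : α < 1 := by
    rw [hαdef]
    have : -qbar / qstar < 0 := div_neg_of_neg_of_pos (neg_neg_iff_pos.mpr hqbar) hqstar
    calc Real.exp (-qbar / qstar) < Real.exp 0 := Real.exp_lt_exp.mpr this
      _ = 1 := Real.exp_zero
  refine ⟨hα1, ?_⟩
  intro ξ hξ t ht
  set β := 1 - α with hβdef
  have hβ0 : 0 < β := by linarith
  have hβ1 : β < 1 := by linarith
  -- basic generator facts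
  have hdiag : ∀ i, -qbar ≤ Q i i := by
    intro i
    have h1 : Q i i + ∑ j ∈ Finset.univ.erase i, Q i j = 0 := by
      rw [Finset.add_sum_erase Finset.univ (Q i) (Finset.mem_univ i)]
      exact hQ.2 i
    have := hrate i
    linarith
  have hQ1 : Q *ᵥ (fun _ => (1 : ℝ)) = 0 := by
    funext i
    simp only [Matrix.mulVec, dotProduct, mul_one, Pi.zero_apply]
    exact hQ.2 i
  -- properties of exp (s • Q) for s ≥ 0
  have key : ∀ s : ℝ, 0 ≤ s →
      (∀ i j, 0 ≤ NormedSpace.exp (s • Q) i j) ∧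
      (∀ i, ∑ j, NormedSpace.exp (s • Q) i j = 1) ∧
      (NormedSpace.exp (s • Q)
        = Real.exp (-(s * qbar)) • NormedSpace.exp (s • Q + (s * qbar) • 1)) := by
    intro s hs
    set B : Matrix (Fin N) (Fin N) ℝ := s • Q + (s * qbar) • 1 with hBdef
    have hBnn : ∀ i j, 0 ≤ B i j := by
      intro i j
      by_cases h : i = j
      · subst h
        have : B i i = s * (Q i i + qbar) := by
          simp [hBdef, Matrix.add_apply, Matrix.smul_apply, Matrix.one_apply]
          ring
        rw [this]
        exact mul_nonneg hs (by have := hdiag i; linarith)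
      · have : B i j = s * Q i j := by
          simp [hBdef, Matrix.add_apply, Matrix.smul_apply, Matrix.one_apply, h]
        rw [this]
        exact mul_nonneg hs (hQ.1 i j h)
    have hdecomp : NormedSpace.exp (s • Q) = Real.exp (-(s * qbar)) • NormedSpace.exp B := by
      have h1 : s • Q = B + (-(s * qbar)) • (1 : Matrix (Fin N) (Fin N) ℝ) := by
        rw [hBdef, add_assoc, ← add_smul]
        simp
      rw [h1, MixAux.exp_add_smul_one]
    refine ⟨?_, ?_, hdecomp⟩
    · intro i j
      rw [hdecomp]
      exact mul_nonneg (Real.exp_pos _).le (MixAux.exp_entry_nonneg hBnn i j)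
    · intro i
      have hs1 : (s • Q) *ᵥ (fun _ => (1 : ℝ)) = 0 := by
        rw [Matrix.smul_mulVec, hQ1, smul_zero]
      have := MixAux.exp_mulVec_one hs1 i
      rw [Matrix.mulVec, dotProduct] at this
      simpa using this
  -- the one-step matrix and its minorization
  set P : Matrix (Fin N) (Fin N) ℝ := NormedSpace.exp (qstar⁻¹ • Q) with hPdef
  have hsinv : (0 : ℝ) ≤ qstar⁻¹ := (inv_pos.mpr hqstar).le
  obtain ⟨hPnn, hProw, hPdec⟩ := key qstar⁻¹ hsinv
  have hPmin : ∀ i, α ≤ P i kstar := by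
    intro i
    set B : Matrix (Fin N) (Fin N) ℝ := qstar⁻¹ • Q + (qstar⁻¹ * qbar) • 1 with hBdef
    have hBnn : ∀ i j, 0 ≤ B i j := by
      intro a b
      by_cases h : a = b
      · subst h
        have : B a a = qstar⁻¹ * (Q a a + qbar) := by
          simp [hBdef, Matrix.add_apply, Matrix.smul_apply, Matrix.one_apply]
          ring
        rw [this]
        exact mul_nonneg hsinv (by have := hdiag a; linarith)
      · have : B a b = qstar⁻¹ * Q a b := by
          simp [hBdef, Matrix.add_apply, Matrix.smul_apply, Matrix.one_apply, h]
        rw [this]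
        exact mul_nonneg hsinv (hQ.1 a b h)
    have hone : (1 : ℝ) ≤ (1 : Matrix (Fin N) (Fin N) ℝ) i kstar + B i kstar := by
      by_cases h : i = kstar
      · subst h
        have h1 : (1 : Matrix (Fin N) (Fin N) ℝ) i i = 1 := Matrix.one_apply_eq i
        have := hBnn i i
        linarith
      · have h1 : (1 : Matrix (Fin N) (Fin N) ℝ) i kstar = 0 := Matrix.one_apply_ne h
        have h2 : B i kstar = qstar⁻¹ * Q i kstar + 0 := by
          simp [hBdef, Matrix.add_apply, Matrix.smul_apply, Matrix.one_apply, h]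
        have h3 : (1 : ℝ) ≤ qstar⁻¹ * Q i kstar := by
          calc (1 : ℝ) = qstar⁻¹ * qstar := (inv_mul_cancel₀ hqstar.ne').symm
            _ ≤ qstar⁻¹ * Q i kstar := mul_le_mul_of_nonneg_left (hmin i h) hsinv
        linarith
    have hval : P i kstar
        = Real.exp (-(qstar⁻¹ * qbar)) * NormedSpace.exp B i kstar := by
      rw [hPdef, hPdec]
      rfl
    have hexp : -qbar / qstar = -(qstar⁻¹ * qbar) := by ring
    rw [hαdef, hval, hexp]
    have hlow := MixAux.exp_entry_lower hBnn i kstar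
    nlinarith [Real.exp_pos (-(qstar⁻¹ * qbar)), hone, hlow]
  -- iteration
  have iter : ∀ n : ℕ,
      l1norm ((Pᵀ) ^ n *ᵥ ξ) ≤ β ^ n * l1norm ξ ∧ ∑ j, ((Pᵀ) ^ n *ᵥ ξ) j = 0 := by
    intro n
    induction n with
    | zero => simp [Matrix.one_mulVec, hξ]
    | succ n ih =>
        have hstep : (Pᵀ) ^ (n + 1) *ᵥ ξ = Pᵀ *ᵥ ((Pᵀ) ^ n *ᵥ ξ) := by
          rw [pow_succ', Matrix.mulVec_mulVec]
        constructor
        · rw [hstep]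
          calc l1norm (Pᵀ *ᵥ ((Pᵀ) ^ n *ᵥ ξ))
              ≤ (1 - α) * l1norm ((Pᵀ) ^ n *ᵥ ξ) :=
                MixAux.doeblin_step P α hα0.le kstar hPnn hProw hPmin _ ih.2
            _ ≤ β * (β ^ n * l1norm ξ) := by
                rw [← hβdef]
                exact mul_le_mul_of_nonneg_left ih.1 hβ0.le
            _ = β ^ (n + 1) * l1norm ξ := by ring
        · rw [hstep]
          rw [MixAux.sum_transpose_mulVec P hProw]
          exact ih.2
  -- time decomposition
  set n : ℕ := ⌊t * qstar⌋₊ with hndef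
  set r : ℝ := t - n * qstar⁻¹ with hrdef
  have hn_le : (n : ℝ) ≤ t * qstar := Nat.floor_le (by positivity)
  have hn_lt : t * qstar < n + 1 := Nat.lt_floor_add_one _
  have hr0 : 0 ≤ r := by
    rw [hrdef, sub_nonneg]
    have hd : (n : ℝ) / qstar ≤ t := (div_le_iff₀ hqstar).mpr hn_le
    calc (n : ℝ) * qstar⁻¹ = n / qstar := by ring
      _ ≤ t := hd
  obtain ⟨hRnn, hRrow, _⟩ := key r hr0
  have hsplit : NormedSpace.exp (t • Q)
      = P ^ n * NormedSpace.exp (r • Q) := by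
    have h1 : t • Q = (n : ℕ) • (qstar⁻¹ • Q) + r • Q := by
      rw [← Nat.cast_smul_eq_nsmul ℝ, smul_smul, ← add_smul]
      congr 1
      rw [hrdef]; ring
    have h2 : Commute ((n : ℕ) • (qstar⁻¹ • Q)) (r • Q) := by
      have : Commute (qstar⁻¹ • Q) (r • Q) :=
        ((Commute.refl Q).smul_left qstar⁻¹).smul_right r
      exact this.smul_left n
    rw [h1, Matrix.exp_add_of_commute _ _ h2, Matrix.exp_nsmul, hPdef]
  have hfinal : NormedSpace.exp (t • Qᵀ) *ᵥ ξ
      = (NormedSpace.exp (r • Q))ᵀ *ᵥ ((Pᵀ) ^ n *ᵥ ξ) := by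
    have h1 : t • Qᵀ = (t • Q)ᵀ := (Matrix.transpose_smul t Q).symm
    rw [h1, Matrix.exp_transpose, hsplit, Matrix.transpose_mul, Matrix.transpose_pow,
      ← Matrix.mulVec_mulVec]
  -- put it together
  have hmain : l1norm (NormedSpace.exp (t • Qᵀ) *ᵥ ξ) ≤ β ^ n * l1norm ξ := by
    rw [hfinal]
    calc l1norm ((NormedSpace.exp (r • Q))ᵀ *ᵥ ((Pᵀ) ^ n *ᵥ ξ))
        ≤ l1norm ((Pᵀ) ^ n *ᵥ ξ) :=
          MixAux.contraction_step _ hRnn hRrow _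
      _ ≤ β ^ n * l1norm ξ := (iter n).1
  -- numeric comparison
  have hnum : β ^ n ≤ β⁻¹ * Real.exp (-(qstar * Real.log (1 / β)) * t) := by
    have hlog : Real.log (1 / β) = -Real.log β := by
      rw [one_div, Real.log_inv]
    have hexp_eq : Real.exp (-(qstar * Real.log (1 / β)) * t) = β ^ (t * qstar) := by
      rw [Real.rpow_def_of_pos hβ0, hlog]
      ring_nf
    rw [hexp_eq]
    have h1 : β ^ ((n : ℝ) + 1) ≤ β ^ (t * qstar) :=
      Real.rpow_le_rpow_of_exponent_ge hβ0 hβ1.le hn_lt.le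
    have h2 : β ^ ((n : ℝ) + 1) = β ^ n * β := by
      rw [Real.rpow_add hβ0, Real.rpow_one, Real.rpow_natCast]
    rw [h2] at h1
    rw [← le_div_iff₀ hβ0] at h1
    calc β ^ n ≤ β ^ (t * qstar) / β := h1
      _ = β⁻¹ * β ^ (t * qstar) := by ring
  have hl1 : 0 ≤ l1norm ξ := Finset.sum_nonneg fun i _ => abs_nonneg _
  calc l1norm (NormedSpace.exp (t • Qᵀ) *ᵥ ξ) ≤ β ^ n * l1norm ξ := hmain
    _ ≤ (β⁻¹ * Real.exp (-(qstar * Real.log (1 / β)) * t)) * l1norm ξ :=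
        mul_le_mul_of_nonneg_right hnum hl1
    _ = β⁻¹ * Real.exp (-(qstar * Real.log (1 / β)) * t) * l1norm ξ := by ring
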